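/- Let 𝔽_4 = {0, 1, ω, ω+1} ⊆ 𝔽_{2^m} where ω² = ω + 1 (so m is even whenever such ω exists in 𝔽_{2^m}), and let G_1 = [[1, ω, 0, ω+1], [0, 0, 1, ω]]. If H ∈ 𝔽_{2^m}^{2×4} is a matrix in reduced row echelon form with M_H = M_{G_1} (as q-matroids on 𝔽_2^4), then H = [[1, β, 0, β²], [0, 0, 1, β]] for some β ∈ 𝔽_{2^m} with β² + β + 1 = 0; that is, H equals G_1 or the matrix obtained from G_1 by replacing ω with ω + 1. -/
import Mathlib


open Module Matrix

/-- The row space (over `Fq`) of a matrix with rows indexed by `Fin y`. -/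
def rowSpace {Fq : Type*} [Field Fq] {y : ℕ} {ι : Type*} (Y : Matrix (Fin y) ι Fq) :
    Submodule Fq (ι → Fq) :=
  Submodule.span Fq (Set.range fun i => Y i)

/-- A matrix is in reduced row echelon form (RREF): zero rows are at the bottom, and the
leading (first nonzero) entry of each nonzero row equals `1`, is the only nonzero entry in
its column, and lies strictly to the left of every nonzero entry of any later row. -/
def IsRREF {K : Type*} [Field K] {k n : ℕ} (H : Matrix (Fin k) (Fin n) K) : Prop :=
  (∀ i i' : Fin k, i ≤ i' → (∀ j, H i j = 0) → ∀ j, H i' j = 0) ∧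
  (∀ (i : Fin k) (j : Fin n), H i j ≠ 0 → (∀ j' < j, H i j' = 0) →
    H i j = 1 ∧ (∀ i' ≠ i, H i' j = 0) ∧
      ∀ (i' : Fin k) (j'' : Fin n), i < i' → H i' j'' ≠ 0 → j < j'')

lemma rank_two_iff' {K : Type*} [Field K] (M : Matrix (Fin 2) (Fin 2) K) :
    M.rank = 2 ↔ M.det ≠ 0 := by
  constructor
  · intro h hd
    obtain ⟨v, hv, hmv⟩ := (Matrix.exists_mulVec_eq_zero_iff).mpr hd
    have hk : LinearMap.ker M.mulVecLin ≠ ⊥ := by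
      intro hb
      exact hv (by simpa [hb] using
        (LinearMap.mem_ker.mpr (by simpa using hmv) : v ∈ LinearMap.ker M.mulVecLin))
    have hrn := LinearMap.finrank_range_add_finrank_ker M.mulVecLin
    have hker : 0 < finrank K (LinearMap.ker M.mulVecLin) := by
      rw [Module.finrank_pos_iff]
      exact Submodule.nontrivial_iff_ne_bot.mpr hk
    rw [Matrix.rank] at h
    rw [h, Module.finrank_pi] at hrn
    simp only [Fintype.card_fin] at hrn
    omega
  · intro hd
    have := Matrix.rank_of_isUnit M
      (by simpa [Matrix.isUnit_iff_isUnit_det, isUnit_iff_ne_zero] using hd)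
    simpa using this

lemma rank_zero_iff' {K : Type*} [Field K] {a b : ℕ} (M : Matrix (Fin a) (Fin b) K) :
    M.rank = 0 ↔ M = 0 := by
  constructor
  · intro h
    have hr : LinearMap.range M.mulVecLin = ⊥ := Submodule.finrank_eq_zero.mp h
    ext i j
    have hz : M.mulVecLin (Pi.single j 1) = 0 := by
      rw [← Submodule.mem_bot (R := K), ← hr]; exact LinearMap.mem_range_self _ _
    have := congrFun hz i
    simpa [Matrix.mulVecLin_apply, Matrix.mulVec_single_one] using this
  · rintro rfl; exact Matrix.rank_zero

theorem stmt15 (K : Type*) [Field K] [Fintype K] [Algebra (ZMod 2) K]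
    (ω : K) (hω : ω ^ 2 = ω + 1)
    (H : Matrix (Fin 2) (Fin 4) K) (hRREF : IsRREF H)
    (hrep : ∀ (y : ℕ) (Y : Matrix (Fin y) (Fin 4) (ZMod 2)),
      (H * (Y.map (algebraMap (ZMod 2) K))ᵀ).rank =
        (!![1, ω, 0, ω + 1; 0, 0, 1, ω] * (Y.map (algebraMap (ZMod 2) K))ᵀ).rank) :
    ∃ β : K, β ^ 2 + β + 1 = 0 ∧ H = !![1, β, 0, β ^ 2; 0, 0, 1, β] := by
  haveI := charP_of_injective_algebraMap (algebraMap (ZMod 2) K).injective 2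
  have h2 : (2 : K) = 0 := by exact_mod_cast CharP.cast_eq_zero K 2
  -- the main transfer principle for 2×2 determinants
  have main : ∀ Y : Matrix (Fin 2) (Fin 4) (ZMod 2),
      ((H * (Y.map (algebraMap (ZMod 2) K))ᵀ).det = 0 ↔
        (!![1, ω, 0, ω + 1; 0, 0, 1, ω] * (Y.map (algebraMap (ZMod 2) K))ᵀ).det = 0) := by
    intro Y
    have h := hrep 2 Y
    constructor
    · intro hd
      by_contra hg
      have h2r : (H * (Y.map (algebraMap (ZMod 2) K))ᵀ).rank = 2 := by
        rw [h]; exact (rank_two_iff' _).mpr hg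
      exact (rank_two_iff' _).mp h2r hd
    · intro hd
      by_contra hg
      have h2r : (!![1, ω, 0, ω + 1; 0, 0, 1, ω] * (Y.map (algebraMap (ZMod 2) K))ᵀ).rank = 2 := by
        rw [← h]; exact (rank_two_iff' _).mpr hg
      exact (rank_two_iff' _).mp h2r hd
  -- column 0 of H is nonzero
  have hcol0 : ¬ (H 0 0 = 0 ∧ H 1 0 = 0) := by
    rintro ⟨p, q⟩
    have h := hrep 1 !![1, 0, 0, 0]
    have hH0 : H * ((!![1, 0, 0, 0] : Matrix (Fin 1) (Fin 4) (ZMod 2)).map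
        (algebraMap (ZMod 2) K))ᵀ = 0 := by
      ext i j
      fin_cases i <;> fin_cases j <;>
        simp [Matrix.mul_apply, Fin.sum_univ_four, p, q]
    rw [hH0, Matrix.rank_zero] at h
    have hz := (rank_zero_iff' _).mp h.symm
    have := congrFun (congrFun hz 0) 0
    simp [Matrix.mul_apply, Fin.sum_univ_four] at this
  -- H 1 0 = 0
  have hH10 : H 1 0 = 0 := by
    by_contra h10
    have hrow0 : ¬ ∀ j, H 0 j = 0 := fun hz => h10 (hRREF.1 0 1 (by decide) hz 0)
    by_cases h00 : H 0 0 = 0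
    · by_cases h01 : H 0 1 = 0
      · by_cases h02 : H 0 2 = 0
        · by_cases h03 : H 0 3 = 0
          · exact hrow0 (fun j => by fin_cases j <;> assumption)
          · have := (hRREF.2 0 3 h03 (fun j' hj' => by
                fin_cases j' <;> first | assumption | (exact absurd hj' (by decide)))).2.2
              1 0 (by decide) h10
            exact absurd this (by decide)
        · have := (hRREF.2 0 2 h02 (fun j' hj' => by
              fin_cases j' <;> first | assumption | (exact absurd hj' (by decide)))).2.2
            1 0 (by decide) h10
          exact absurd this (by decide)
      · have := (hRREF.2 0 1 h01 (fun j' hj' => by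
            fin_cases j' <;> first | assumption | (exact absurd hj' (by decide)))).2.2
          1 0 (by decide) h10
        exact absurd this (by decide)
    · have := (hRREF.2 0 0 h00 (fun j' hj' => by fin_cases j' <;> exact absurd hj' (by decide))).2.2
        1 0 (by decide) h10
      exact absurd this (by decide)
  have h00ne : H 0 0 ≠ 0 := fun h => hcol0 ⟨h, hH10⟩
  have hH00 : H 0 0 = 1 := (hRREF.2 0 0 h00ne (fun j' hj' => by fin_cases j' <;> exact absurd hj' (by decide))).1
  -- H 1 1 = 0, from rank-1 of columns {0,1}
  have hG1 : (!![1, ω, 0, ω + 1; 0, 0, 1, ω] *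
      ((!![1,0,0,0;0,1,0,0] : Matrix (Fin 2) (Fin 4) (ZMod 2)).map
        (algebraMap (ZMod 2) K))ᵀ).det = 0 := by
    have : (!![1, ω, 0, ω + 1; 0, 0, 1, ω] *
        ((!![1,0,0,0;0,1,0,0] : Matrix (Fin 2) (Fin 4) (ZMod 2)).map
          (algebraMap (ZMod 2) K))ᵀ) = !![1, ω; 0, 0] := by
      ext i j
      fin_cases i <;> fin_cases j <;> simp [Matrix.mul_apply, Fin.sum_univ_four]
    rw [this, Matrix.det_fin_two_of]; ring
  have e1 := (main !![1,0,0,0;0,1,0,0]).mpr hG1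
  have hm1 : H * ((!![1,0,0,0;0,1,0,0] : Matrix (Fin 2) (Fin 4) (ZMod 2)).map
      (algebraMap (ZMod 2) K))ᵀ = !![1, H 0 1; 0, H 1 1] := by
    ext i j
    fin_cases i <;> fin_cases j <;>
      simp [Matrix.mul_apply, Fin.sum_univ_four, hH00, hH10]
  rw [hm1, Matrix.det_fin_two_of] at e1
  have hH11 : H 1 1 = 0 := by linear_combination e1
  -- H 1 2 ≠ 0, from rank-2 of columns {0,2}
  have hG2 : (!![1, ω, 0, ω + 1; 0, 0, 1, ω] *
      ((!![1,0,0,0;0,0,1,0] : Matrix (Fin 2) (Fin 4) (ZMod 2)).map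
        (algebraMap (ZMod 2) K))ᵀ).det ≠ 0 := by
    have : (!![1, ω, 0, ω + 1; 0, 0, 1, ω] *
        ((!![1,0,0,0;0,0,1,0] : Matrix (Fin 2) (Fin 4) (ZMod 2)).map
          (algebraMap (ZMod 2) K))ᵀ) = !![1, 0; 0, 1] := by
      ext i j
      fin_cases i <;> fin_cases j <;> simp [Matrix.mul_apply, Fin.sum_univ_four]
    rw [this, Matrix.det_fin_two_of]; norm_num
  have hH12 : H 1 2 ≠ 0 := by
    intro h12
    apply hG2
    apply (main !![1,0,0,0;0,0,1,0]).mp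
    have hm2 : H * ((!![1,0,0,0;0,0,1,0] : Matrix (Fin 2) (Fin 4) (ZMod 2)).map
        (algebraMap (ZMod 2) K))ᵀ = !![1, H 0 2; 0, 0] := by
      ext i j
      fin_cases i <;> fin_cases j <;>
        simp [Matrix.mul_apply, Fin.sum_univ_four, hH00, hH10, h12]
    rw [hm2, Matrix.det_fin_two_of]; ring
  -- leading entry of row 1 is at column 2
  have lead1 := hRREF.2 1 2 hH12 (fun j' hj' => by
    fin_cases j' <;> first | assumption | (exact absurd hj' (by decide)))
  have hH12' : H 1 2 = 1 := lead1.1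
  have hH02 : H 0 2 = 0 := lead1.2.1 0 (by decide)
  -- equation e5 : 1 + a + c = 0
  have hG5 : (!![1, ω, 0, ω + 1; 0, 0, 1, ω] *
      ((!![0,0,1,0;1,1,0,1] : Matrix (Fin 2) (Fin 4) (ZMod 2)).map
        (algebraMap (ZMod 2) K))ᵀ).det = 0 := by
    have : (!![1, ω, 0, ω + 1; 0, 0, 1, ω] *
        ((!![0,0,1,0;1,1,0,1] : Matrix (Fin 2) (Fin 4) (ZMod 2)).map
          (algebraMap (ZMod 2) K))ᵀ) = !![0, 1 + ω + (ω + 1); 1, ω] := by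
      ext i j
      fin_cases i <;> fin_cases j <;> simp [Matrix.mul_apply, Fin.sum_univ_four]
    rw [this, Matrix.det_fin_two_of]
    linear_combination (-1 - ω) * h2
  have e5 := (main !![0,0,1,0;1,1,0,1]).mpr hG5
  have hm5 : H * ((!![0,0,1,0;1,1,0,1] : Matrix (Fin 2) (Fin 4) (ZMod 2)).map
      (algebraMap (ZMod 2) K))ᵀ = !![0, 1 + H 0 1 + H 0 3; 1, H 1 3] := by
    ext i j
    fin_cases i <;> fin_cases j <;>
      simp [Matrix.mul_apply, Fin.sum_univ_four, hH00, hH10, hH11, hH02, hH12']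
  rw [hm5, Matrix.det_fin_two_of] at e5
  have hc : H 0 3 = 1 + H 0 1 := by linear_combination -e5 - (1 + H 0 1) * h2
  -- equation e6 : d = c - 1
  have hG6 : (!![1, ω, 0, ω + 1; 0, 0, 1, ω] *
      ((!![1,0,1,0;0,0,1,1] : Matrix (Fin 2) (Fin 4) (ZMod 2)).map
        (algebraMap (ZMod 2) K))ᵀ).det = 0 := by
    have : (!![1, ω, 0, ω + 1; 0, 0, 1, ω] *
        ((!![1,0,1,0;0,0,1,1] : Matrix (Fin 2) (Fin 4) (ZMod 2)).map
          (algebraMap (ZMod 2) K))ᵀ) = !![1, ω + 1; 1, 1 + ω] := by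
      ext i j
      fin_cases i <;> fin_cases j <;> simp [Matrix.mul_apply, Fin.sum_univ_four]
    rw [this, Matrix.det_fin_two_of]; ring
  have e6 := (main !![1,0,1,0;0,0,1,1]).mpr hG6
  have hm6 : H * ((!![1,0,1,0;0,0,1,1] : Matrix (Fin 2) (Fin 4) (ZMod 2)).map
      (algebraMap (ZMod 2) K))ᵀ = !![1, H 0 3; 1, 1 + H 1 3] := by
    ext i j
    fin_cases i <;> fin_cases j <;>
      simp [Matrix.mul_apply, Fin.sum_univ_four, hH00, hH10, hH11, hH02, hH12']
  rw [hm6, Matrix.det_fin_two_of, hc] at e6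
  have hd : H 1 3 = H 0 1 := by linear_combination e6
  -- equation e7 : a² + a + 1 = 0
  have hG7 : (!![1, ω, 0, ω + 1; 0, 0, 1, ω] *
      ((!![0,1,0,1;1,0,1,1] : Matrix (Fin 2) (Fin 4) (ZMod 2)).map
        (algebraMap (ZMod 2) K))ᵀ).det = 0 := by
    have : (!![1, ω, 0, ω + 1; 0, 0, 1, ω] *
        ((!![0,1,0,1;1,0,1,1] : Matrix (Fin 2) (Fin 4) (ZMod 2)).map
          (algebraMap (ZMod 2) K))ᵀ) = !![ω + (ω + 1), 1 + (ω + 1); ω, 1 + ω] := by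
      ext i j
      fin_cases i <;> fin_cases j <;> simp [Matrix.mul_apply, Fin.sum_univ_four]
    rw [this, Matrix.det_fin_two_of]
    linear_combination hω + (1 + ω) * h2
  have e7 := (main !![0,1,0,1;1,0,1,1]).mpr hG7
  have hm7 : H * ((!![0,1,0,1;1,0,1,1] : Matrix (Fin 2) (Fin 4) (ZMod 2)).map
      (algebraMap (ZMod 2) K))ᵀ = !![H 0 1 + H 0 3, 1 + H 0 3; H 1 3, 1 + H 1 3] := by
    ext i j
    fin_cases i <;> fin_cases j <;>
      simp [Matrix.mul_apply, Fin.sum_univ_four, hH00, hH10, hH11, hH02, hH12']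
  rw [hm7, Matrix.det_fin_two_of, hc, hd] at e7
  have hq : H 0 1 ^ 2 + H 0 1 + 1 = 0 := by linear_combination e7
  refine ⟨H 0 1, hq, ?_⟩
  have hc2 : H 0 3 = H 0 1 ^ 2 := by linear_combination hc - hq + (H 0 1 + 1) * h2
  ext i j
  fin_cases i <;> fin_cases j <;>
    simp [hH00, hH10, hH11, hH02, hH12', hc2, hd]
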